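/- Let n ≥ 2 and 1 ≤ n₁ < n be integers with either n₁ = 2 < n−1 or 1 < n₁ = n−2. For k ∈ ℕ let N_k be the set of all products ∏_{1≤i≤n₁, n₁+1≤t≤n} (x_i·x_t − y_i·y_t)^{h_{it}} over tuples of natural numbers (h_{it}) with ∑ h_{it} = k, and let d_k = dim span N_k. Then there exist real constants c₁, c₂ > 0 and K ∈ ℕ such that c₁·k^{2n−5} ≤ d_k ≤ c₂·k^{2n−5} for all k ≥ K. -/

import Mathlib

open MvPolynomial

/-- The set N_k of products ∏ (x_i x_t − y_i y_t)^{h_{it}} over tuples with ∑ h_{it} = k,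
where (0-based) i ranges over indices with i.val < n₁ (i.e. 1 ≤ i ≤ n₁) and t over indices
with n₁ ≤ t.val (i.e. n₁+1 ≤ t ≤ n). x-variables are `Sum.inl`, y-variables `Sum.inr`. -/
def Nset (n n₁ k : ℕ) : Set (MvPolynomial (Fin n ⊕ Fin n) ℝ) :=
  {f | ∃ h : Fin n → Fin n → ℕ,
    (∑ i ∈ Finset.univ.filter (fun i : Fin n => i.val < n₁),
      ∑ t ∈ Finset.univ.filter (fun t : Fin n => n₁ ≤ t.val), h i t) = k ∧
    f = ∏ i ∈ Finset.univ.filter (fun i : Fin n => i.val < n₁),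
        ∏ t ∈ Finset.univ.filter (fun t : Fin n => n₁ ≤ t.val),
          (X (Sum.inl i) * X (Sum.inl t) - X (Sum.inr i) * X (Sum.inr t)) ^ h i t}


noncomputable def psi (n : ℕ) (a b : Fin n) :
    MvPolynomial (Fin n ⊕ Fin n) ℝ →ₐ[ℝ] MvPolynomial (Fin n ⊕ Fin n) ℝ :=
  aeval (Sum.elim (fun i => if i = b then 0 else X (Sum.inl i))
    (fun i => if i = a then 0 else X (Sum.inr i)))

lemma prod_monomial {σ R α : Type*} [CommSemiring R] (s : Finset α) (d : α → (σ →₀ ℕ)) (c : α → R) :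
    ∏ x ∈ s, (monomial (d x) (c x) : MvPolynomial σ R)
      = monomial (∑ x ∈ s, d x) (∏ x ∈ s, c x) := by
  classical
  induction s using Finset.cons_induction with
  | empty => simp [monomial_eq]
  | cons a s ha ih => simp [Finset.prod_insert ha, Finset.sum_insert ha, ih, monomial_mul]

lemma core {n : ℕ} {a b : Fin n} (hab : a ≠ b) {B : Finset (Fin n)} (haB : a ∉ B) (hbB : b ∉ B)
    {ι : Type*} (g₁ g₂ : ι → Fin n → ℕ)
    (hinj : ∀ p q : ι, (∀ t ∈ B, g₁ p t = g₁ q t ∧ g₂ p t = g₂ q t) → p = q) :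
    LinearIndependent ℝ (fun p : ι =>
      ∏ t ∈ B, ((X (Sum.inl a) * X (Sum.inl t) - X (Sum.inr a) * X (Sum.inr t)) ^ g₁ p t *
        (X (Sum.inl b) * X (Sum.inl t) - X (Sum.inr b) * X (Sum.inr t)) ^ g₂ p t :
        MvPolynomial (Fin n ⊕ Fin n) ℝ)) := by
  classical
  set D : ι → ((Fin n ⊕ Fin n) →₀ ℕ) := fun p =>
    ∑ t ∈ B, (g₁ p t • (Finsupp.single (Sum.inl a) 1 + Finsupp.single (Sum.inl t) 1)
      + g₂ p t • (Finsupp.single (Sum.inr b) 1 + Finsupp.single (Sum.inr t) 1)) with hD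
  have happ : ∀ p : ι, ∀ t₀ ∈ B, D p (Sum.inl t₀) = g₁ p t₀ ∧ D p (Sum.inr t₀) = g₂ p t₀ := by
    intro p t₀ ht₀
    have hat : a ≠ t₀ := fun h => haB (h ▸ ht₀)
    have hbt : b ≠ t₀ := fun h => hbB (h ▸ ht₀)
    constructor
    · rw [hD]
      simp only [Finsupp.finset_sum_apply, Finsupp.add_apply, Finsupp.smul_apply,
        Finsupp.single_apply, smul_eq_mul]
      rw [Finset.sum_congr rfl (fun t ht =>
        show _ = if t = t₀ then g₁ p t else 0 by
          rcases eq_or_ne t t₀ with h | h <;> simp [h, hat]), Finset.sum_ite_eq' B t₀]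
      simp [ht₀]
    · rw [hD]
      simp only [Finsupp.finset_sum_apply, Finsupp.add_apply, Finsupp.smul_apply,
        Finsupp.single_apply, smul_eq_mul]
      rw [Finset.sum_congr rfl (fun t ht =>
        show _ = if t = t₀ then g₂ p t else 0 by
          rcases eq_or_ne t t₀ with h | h <;> simp [h, hbt]), Finset.sum_ite_eq' B t₀]
      simp [ht₀]
  have hDinj : Function.Injective D := by
    intro p q hpq
    exact hinj p q (fun t ht => ⟨by rw [← (happ p t ht).1, ← (happ q t ht).1, hpq],
      by rw [← (happ p t ht).2, ← (happ q t ht).2, hpq]⟩)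
  set ψ := psi n a b with hψ
  have himg : ∀ p : ι,
      ψ (∏ t ∈ B, ((X (Sum.inl a) * X (Sum.inl t) - X (Sum.inr a) * X (Sum.inr t)) ^ g₁ p t *
        (X (Sum.inl b) * X (Sum.inl t) - X (Sum.inr b) * X (Sum.inr t)) ^ g₂ p t))
      = monomial (D p) ((-1 : ℝ) ^ (∑ t ∈ B, g₂ p t)) := by
    intro p
    rw [map_prod]
    have step : ∀ t ∈ B,
        ψ ((X (Sum.inl a) * X (Sum.inl t) - X (Sum.inr a) * X (Sum.inr t)) ^ g₁ p t *
          (X (Sum.inl b) * X (Sum.inl t) - X (Sum.inr b) * X (Sum.inr t)) ^ g₂ p t)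
        = monomial (g₁ p t • (Finsupp.single (Sum.inl a) 1 + Finsupp.single (Sum.inl t) 1)
            + g₂ p t • (Finsupp.single (Sum.inr b) 1 + Finsupp.single (Sum.inr t) 1))
            ((-1 : ℝ) ^ g₂ p t) := by
      intro t ht
      have hat : t ≠ a := fun h => haB (h ▸ ht)
      have hbt : t ≠ b := fun h => hbB (h ▸ ht)
      rw [hψ]
      simp only [psi, map_mul, map_pow, map_sub, aeval_X, Sum.elim_inl, Sum.elim_inr,
        if_pos rfl, if_neg hab, if_neg hab.symm, if_neg hat, if_neg hbt]
      simp only [if_true, zero_mul, mul_zero, sub_zero, zero_sub]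
      rw [show (X (Sum.inl a) : MvPolynomial (Fin n ⊕ Fin n) ℝ) = monomial (Finsupp.single (Sum.inl a) 1) 1 from rfl,
        show (X (Sum.inl t) : MvPolynomial (Fin n ⊕ Fin n) ℝ) = monomial (Finsupp.single (Sum.inl t) 1) 1 from rfl,
        show (X (Sum.inr b) : MvPolynomial (Fin n ⊕ Fin n) ℝ) = monomial (Finsupp.single (Sum.inr b) 1) 1 from rfl,
        show (X (Sum.inr t) : MvPolynomial (Fin n ⊕ Fin n) ℝ) = monomial (Finsupp.single (Sum.inr t) 1) 1 from rfl,
        monomial_mul, monomial_mul, ← map_neg, monomial_pow, monomial_pow, monomial_mul]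
      simp [smul_add]
    rw [Finset.prod_congr rfl step, prod_monomial, hD]
    congr 1
    rw [← Finset.prod_pow_eq_pow_sum]
  have key : LinearIndependent ℝ (fun p : ι => ψ (∏ t ∈ B,
      ((X (Sum.inl a) * X (Sum.inl t) - X (Sum.inr a) * X (Sum.inr t)) ^ g₁ p t *
        (X (Sum.inl b) * X (Sum.inl t) - X (Sum.inr b) * X (Sum.inr t)) ^ g₂ p t))) := by
    have base := (basisMonomials (Fin n ⊕ Fin n) ℝ).linearIndependent.comp D hDinj
    have := base.units_smul (fun p => (-1 : ℝˣ) ^ (∑ t ∈ B, g₂ p t))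
    convert this using 2 with p
    rw [himg p]
    simp only [Pi.smul_apply', Function.comp_apply, coe_basisMonomials, Units.smul_def,
      smul_monomial, Units.val_pow_eq_pow_val, Units.val_neg, Units.val_one, smul_eq_mul, mul_one]
    all_goals rfl
  exact key.of_comp ψ.toLinearMap

def Lset (n n₁ : ℕ) : Finset (Fin n) := Finset.univ.filter (fun i => i.val < n₁)
def Rset (n n₁ : ℕ) : Finset (Fin n) := Finset.univ.filter (fun t => n₁ ≤ t.val)
def PS (n n₁ : ℕ) : Finset (Fin n × Fin n) := Lset n n₁ ×ˢ Rset n n₁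

lemma mem_Lset {n n₁ : ℕ} {i : Fin n} : i ∈ Lset n n₁ ↔ i.val < n₁ := by
  simp [Lset]

lemma mem_Rset {n n₁ : ℕ} {t : Fin n} : t ∈ Rset n n₁ ↔ n₁ ≤ t.val := by
  simp [Rset]

def Tk (n n₁ k : ℕ) : Finset (Fin n → Fin n → ℕ) :=
  (Fintype.piFinset fun _ : Fin n => Fintype.piFinset fun _ : Fin n => Finset.range (k+1)).filter
    (fun h => (∀ i t : Fin n, ¬(i.val < n₁ ∧ n₁ ≤ t.val) → h i t = 0) ∧
      (∑ i ∈ Lset n n₁, ∑ t ∈ Rset n n₁, h i t) = k)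

def Wf (n n₁ c : ℕ) : Finset (Fin n → Fin n → ℕ) :=
  Fintype.piFinset fun i : Fin n => Fintype.piFinset fun t : Fin n =>
    if (i.val < n₁ ∧ n₁ ≤ t.val) ∧ ¬(i.val = 0 ∧ t.val = n₁) then Finset.range (c+1) else {0}

lemma card_PS {n n₁ : ℕ} (h2 : n₁ < n) : (PS n n₁).card = n₁ * (n - n₁) := by
  have hL : (Lset n n₁).card = n₁ := by
    have : Lset n n₁ = Finset.Iio (⟨n₁, h2⟩ : Fin n) := by
      ext i
      simp [Lset, Finset.mem_Iio, Fin.lt_def]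
    rw [this, Fin.card_Iio]
  have hR : (Rset n n₁).card = n - n₁ := by
    have h := Finset.card_filter_add_card_filter_not
      (s := (Finset.univ : Finset (Fin n))) (p := fun i => i.val < n₁)
    rw [Finset.card_univ, Fintype.card_fin] at h
    have : Rset n n₁ = Finset.univ.filter (fun i : Fin n => ¬ i.val < n₁) := by
      ext i
      simp only [Rset, Finset.mem_filter, Finset.mem_univ, true_and]
      omega
    rw [this]
    have := hL
    rw [Lset] at this
    omega
  rw [PS, Finset.card_product, hL, hR]

lemma p0_mem {n n₁ : ℕ} (h1 : 1 ≤ n₁) (h2 : n₁ < n) :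
    ((⟨0, by omega⟩ : Fin n), (⟨n₁, h2⟩ : Fin n)) ∈ PS n n₁ := by
  simp [PS, Lset, Rset, Finset.mem_product]
  omega

lemma mem_erase_iff_vals {n n₁ : ℕ} (h1 : 1 ≤ n₁) (h2 : n₁ < n) (p : Fin n × Fin n) :
    p ∈ (PS n n₁).erase ((⟨0, by omega⟩ : Fin n), (⟨n₁, h2⟩ : Fin n)) ↔
      (p.1.val < n₁ ∧ n₁ ≤ p.2.val) ∧ ¬(p.1.val = 0 ∧ p.2.val = n₁) := by
  rw [Finset.mem_erase]
  simp only [PS, Lset, Rset, Finset.mem_product, Finset.mem_filter, Finset.mem_univ, true_and]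
  constructor
  · rintro ⟨hne, hA, hB⟩
    refine ⟨⟨hA, hB⟩, fun hv => hne ?_⟩
    ext
    · exact hv.1
    · exact hv.2
  · rintro ⟨⟨hA, hB⟩, hv⟩
    exact ⟨fun he => hv (by rw [he]; exact ⟨rfl, rfl⟩), hA, hB⟩

lemma card_Wf {n n₁ : ℕ} (c : ℕ) (h1 : 1 ≤ n₁) (h2 : n₁ < n) :
    (Wf n n₁ c).card = (c+1) ^ (n₁ * (n - n₁) - 1) := by
  classical
  rw [Wf, Fintype.card_piFinset]
  simp_rw [Fintype.card_piFinset]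
  have step : ∀ i t : Fin n,
      ((if (i.val < n₁ ∧ n₁ ≤ t.val) ∧ ¬(i.val = 0 ∧ t.val = n₁) then Finset.range (c+1)
        else ({0} : Finset ℕ)).card)
      = if (i, t) ∈ (PS n n₁).erase ((⟨0, by omega⟩ : Fin n), (⟨n₁, h2⟩ : Fin n)) then c+1 else 1 := by
    intro i t
    simp only [mem_erase_iff_vals h1 h2]
    split_ifs with h
    · exact Finset.card_range _
    · exact Finset.card_singleton _
  calc (∏ i : Fin n, ∏ t : Fin n,
        ((if (i.val < n₁ ∧ n₁ ≤ t.val) ∧ ¬(i.val = 0 ∧ t.val = n₁) then Finset.range (c+1)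
          else ({0} : Finset ℕ)).card))
      = ∏ p ∈ (Finset.univ : Finset (Fin n × Fin n)),
          (if p ∈ (PS n n₁).erase ((⟨0, by omega⟩ : Fin n), (⟨n₁, h2⟩ : Fin n)) then c+1 else 1) := by
        rw [← Finset.univ_product_univ, Finset.prod_product]
        exact Finset.prod_congr rfl fun i _ => Finset.prod_congr rfl fun t _ => step i t
    _ = (c+1) ^ (n₁ * (n - n₁) - 1) := by
        rw [Finset.prod_ite_mem, Finset.univ_inter, Finset.prod_const,
          Finset.card_erase_of_mem (p0_mem h1 h2), card_PS h2]

lemma sum_PS {n n₁ : ℕ} (h : Fin n → Fin n → ℕ) :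
    ∑ p ∈ PS n n₁, h p.1 p.2 = ∑ i ∈ Lset n n₁, ∑ t ∈ Rset n n₁, h i t := by
  rw [PS, Finset.sum_product]

lemma card_Tk_le {n n₁ : ℕ} (k : ℕ) (h1 : 1 ≤ n₁) (h2 : n₁ < n) :
    (Tk n n₁ k).card ≤ (k+1) ^ (n₁ * (n - n₁) - 1) := by
  classical
  rw [← card_Wf k h1 h2]
  apply Finset.card_le_card_of_injOn (fun h i t => if i.val = 0 ∧ t.val = n₁ then 0 else h i t)
  · intro h hh
    rw [Finset.mem_coe, Tk, Finset.mem_filter] at hh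
    obtain ⟨hpi, hsupp, hsum⟩ := hh
    rw [Fintype.mem_piFinset] at hpi
    rw [Finset.mem_coe, Wf, Fintype.mem_piFinset]
    intro i
    rw [Fintype.mem_piFinset]
    intro t
    have hpi' := (Fintype.mem_piFinset).mp (hpi i) t
    by_cases hp : i.val = 0 ∧ t.val = n₁
    · have : ¬((i.val < n₁ ∧ n₁ ≤ t.val) ∧ ¬(i.val = 0 ∧ t.val = n₁)) := by tauto
      simp [hp, this]
    · by_cases hc : i.val < n₁ ∧ n₁ ≤ t.val
      · simp only [hp, if_false, hc, not_false_iff, and_self, if_true]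
        exact hpi'
      · have hno : ¬((i.val < n₁ ∧ n₁ ≤ t.val) ∧ ¬(i.val = 0 ∧ t.val = n₁)) := by tauto
        beta_reduce
        rw [if_neg hno, hsupp i t hc, if_neg hp]
        simp
  · intro g hg g' hg' he
    simp only [Tk, Finset.mem_filter, Finset.coe_filter, Set.mem_setOf_eq] at hg hg'
    obtain ⟨-, hsupp, hsum⟩ := hg
    obtain ⟨-, hsupp', hsum'⟩ := hg'
    have hoff : ∀ i t : Fin n, ¬(i.val = 0 ∧ t.val = n₁) → g i t = g' i t := by
      intro i t hp
      have := congrFun (congrFun he i) t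
      simpa [hp] using this
    -- sums over erased set agree
    have hmem := p0_mem h1 h2
    set p₀ := ((⟨0, by omega⟩ : Fin n), (⟨n₁, h2⟩ : Fin n)) with hp₀
    have hps : ∀ (f : Fin n → Fin n → ℕ), (∑ i ∈ Lset n n₁, ∑ t ∈ Rset n n₁, f i t) =
        f p₀.1 p₀.2 + ∑ p ∈ (PS n n₁).erase p₀, f p.1 p.2 := by
      intro f
      rw [← sum_PS, ← Finset.add_sum_erase _ _ hmem]
    have herase : ∑ p ∈ (PS n n₁).erase p₀, g p.1 p.2 = ∑ p ∈ (PS n n₁).erase p₀, g' p.1 p.2 := by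
      refine Finset.sum_congr rfl fun p hp => ?_
      have := (mem_erase_iff_vals h1 h2 p).mp hp
      exact hoff p.1 p.2 this.2
    have h0 : g p₀.1 p₀.2 = g' p₀.1 p₀.2 := by
      have e1 := hps g
      have e2 := hps g'
      rw [hsum] at e1; rw [hsum'] at e2
      omega
    funext i t
    by_cases hp : i.val = 0 ∧ t.val = n₁
    · have hi : i = p₀.1 := by ext; exact hp.1
      have ht : t = p₀.2 := by ext; exact hp.2
      rw [hi, ht]; exact h0
    · exact hoff i t hp

lemma card_Tk_ge {n n₁ : ℕ} (k : ℕ) (h1 : 1 ≤ n₁) (h2 : n₁ < n) (hm : 2 ≤ n₁ * (n - n₁)) :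
    (k / (n₁ * (n - n₁) - 1) + 1) ^ (n₁ * (n - n₁) - 1) ≤ (Tk n n₁ k).card := by
  classical
  set m := n₁ * (n - n₁) with hmdef
  set q := k / (m - 1) with hq
  rw [← card_Wf q h1 h2]
  have hmem := p0_mem h1 h2
  set p₀ := ((⟨0, by omega⟩ : Fin n), (⟨n₁, h2⟩ : Fin n)) with hp₀
  apply Finset.card_le_card_of_injOn
    (fun g i t => if i.val = 0 ∧ t.val = n₁ then k - (∑ p ∈ (PS n n₁).erase p₀, g p.1 p.2) else g i t)
  · intro g hg
    have hgmem : ∀ i t : Fin n, g i t ∈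
        (if (i.val < n₁ ∧ n₁ ≤ t.val) ∧ ¬(i.val = 0 ∧ t.val = n₁) then Finset.range (q+1)
          else ({0} : Finset ℕ)) := by
      intro i t
      rw [Finset.mem_coe, Wf, Fintype.mem_piFinset] at hg
      exact (Fintype.mem_piFinset).mp (hg i) t
    have hgle : ∀ p ∈ (PS n n₁).erase p₀, g p.1 p.2 ≤ q := by
      intro p hp
      have hc := (mem_erase_iff_vals h1 h2 p).mp hp
      have := hgmem p.1 p.2
      rw [if_pos hc, Finset.mem_range] at this
      omega
    have hg0 : ∀ i t : Fin n, ¬((i.val < n₁ ∧ n₁ ≤ t.val) ∧ ¬(i.val = 0 ∧ t.val = n₁)) → g i t = 0 := by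
      intro i t hc
      have := hgmem i t
      rw [if_neg hc, Finset.mem_singleton] at this
      exact this
    set s := ∑ p ∈ (PS n n₁).erase p₀, g p.1 p.2 with hs
    have hsle : s ≤ k := by
      have hcard : ((PS n n₁).erase p₀).card = m - 1 := by
        rw [Finset.card_erase_of_mem hmem, card_PS h2]
      have := Finset.sum_le_card_nsmul ((PS n n₁).erase p₀) (fun p => g p.1 p.2) q hgle
      rw [hcard, smul_eq_mul] at this
      have hdiv : (m - 1) * q ≤ k := by
        rw [hq, mul_comm]
        exact Nat.div_mul_le_self k (m - 1)
      omega
    rw [Finset.mem_coe, Tk, Finset.mem_filter]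
    refine ⟨?_, ?_, ?_⟩
    · rw [Fintype.mem_piFinset]
      intro i
      rw [Fintype.mem_piFinset]
      intro t
      rw [Finset.mem_range]
      by_cases hp : i.val = 0 ∧ t.val = n₁
      · simp only [hp, and_self, if_true]
        omega
      · simp only [hp, if_false]
        by_cases hc : (i.val < n₁ ∧ n₁ ≤ t.val)
        · have := hgmem i t
          rw [if_pos ⟨hc, hp⟩, Finset.mem_range] at this
          have hqk : q ≤ k := Nat.div_le_self _ _
          omega
        · rw [hg0 i t (by tauto)]
          omega
    · intro i t hc
      have hp : ¬(i.val = 0 ∧ t.val = n₁) := by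
        intro hp
        exact hc ⟨by omega, by omega⟩
      simp only [hp, if_false]
      exact hg0 i t (by tauto)
    · have hsplit : ∀ (f : Fin n → Fin n → ℕ), (∑ i ∈ Lset n n₁, ∑ t ∈ Rset n n₁, f i t) =
          f p₀.1 p₀.2 + ∑ p ∈ (PS n n₁).erase p₀, f p.1 p.2 := by
        intro f
        rw [← sum_PS, ← Finset.add_sum_erase _ _ hmem]
      rw [hsplit]
      have c₁ : (p₀.1 : Fin n).val = 0 ∧ (p₀.2 : Fin n).val = n₁ := ⟨rfl, rfl⟩
      beta_reduce
      rw [if_pos c₁]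
      have e2 : (∑ p ∈ (PS n n₁).erase p₀,
          if p.1.val = 0 ∧ p.2.val = n₁ then k - s else g p.1 p.2) = s := by
        rw [hs]
        refine Finset.sum_congr rfl fun p hp => ?_
        rw [if_neg ((mem_erase_iff_vals h1 h2 p).mp hp).2]
      rw [e2]
      omega
  · intro g hg g' hg' he
    have hgmem : ∀ (u : Fin n → Fin n → ℕ), u ∈ Wf n n₁ q → ∀ i t : Fin n,
        ¬((i.val < n₁ ∧ n₁ ≤ t.val) ∧ ¬(i.val = 0 ∧ t.val = n₁)) → u i t = 0 := by
      intro u hu i t hc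
      rw [Wf, Fintype.mem_piFinset] at hu
      have := (Fintype.mem_piFinset).mp (hu i) t
      rw [if_neg hc, Finset.mem_singleton] at this
      exact this
    funext i t
    by_cases hp : i.val = 0 ∧ t.val = n₁
    · rw [hgmem g hg i t (by tauto), hgmem g' hg' i t (by tauto)]
    · have := congrFun (congrFun he i) t
      simpa [hp] using this

noncomputable def Ff (n n₁ : ℕ) (h : Fin n → Fin n → ℕ) : MvPolynomial (Fin n ⊕ Fin n) ℝ :=
  ∏ i ∈ Lset n n₁, ∏ t ∈ Rset n n₁,
    (X (Sum.inl i) * X (Sum.inl t) - X (Sum.inr i) * X (Sum.inr t)) ^ h i t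

lemma Nset_eq (n n₁ k : ℕ) : Nset n n₁ k = ↑((Tk n n₁ k).image (Ff n n₁)) := by
  classical
  ext f
  simp only [Nset, Set.mem_setOf_eq, Finset.coe_image, Set.mem_image, Finset.mem_coe]
  constructor
  · rintro ⟨h, hsum, rfl⟩
    have hsum' : (∑ i ∈ Lset n n₁, ∑ t ∈ Rset n n₁, h i t) = k := hsum
    refine ⟨fun i t => if i.val < n₁ ∧ n₁ ≤ t.val then h i t else 0, ?_, ?_⟩
    · rw [Tk, Finset.mem_filter]
      refine ⟨?_, fun i t hc => by simp only [if_neg hc], ?_⟩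
      · rw [Fintype.mem_piFinset]
        intro i
        rw [Fintype.mem_piFinset]
        intro t
        rw [Finset.mem_range]
        split_ifs with hc
        · have hiL : i ∈ Lset n n₁ := mem_Lset.mpr hc.1
          have htR : t ∈ Rset n n₁ := mem_Rset.mpr hc.2
          have e1 : h i t ≤ ∑ t' ∈ Rset n n₁, h i t' :=
            Finset.single_le_sum (fun _ _ => Nat.zero_le _) htR
          have e2 : (∑ t' ∈ Rset n n₁, h i t') ≤
              ∑ i' ∈ Lset n n₁, ∑ t' ∈ Rset n n₁, h i' t' :=
            Finset.single_le_sum (f := fun i' => ∑ t' ∈ Rset n n₁, h i' t')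
              (fun _ _ => Nat.zero_le _) hiL
          omega
        · omega
      · rw [← hsum']
        refine Finset.sum_congr rfl fun i hi => Finset.sum_congr rfl fun t ht => ?_
        rw [mem_Lset] at hi; rw [mem_Rset] at ht
        show (if ↑i < n₁ ∧ n₁ ≤ ↑t then h i t else 0) = h i t
        rw [if_pos ⟨hi, ht⟩]
    · show _ = Ff n n₁ _
      rw [Ff]
      refine Finset.prod_congr rfl fun i hi => Finset.prod_congr rfl fun t ht => ?_
      rw [mem_Lset] at hi; rw [mem_Rset] at ht
      rw [show (if ↑i < n₁ ∧ n₁ ≤ ↑t then h i t else 0) = h i t from if_pos ⟨hi, ht⟩]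
  · rintro ⟨g, hg, rfl⟩
    rw [Tk, Finset.mem_filter] at hg
    exact ⟨g, hg.2.2, rfl⟩

lemma indep (n n₁ k : ℕ) (h1 : 1 ≤ n₁) (h2 : n₁ < n)
    (hcase : (n₁ = 2 ∧ 2 < n - 1) ∨ (1 < n₁ ∧ n₁ = n - 2)) :
    LinearIndependent ℝ (fun g : ↥(Tk n n₁ k) => Ff n n₁ (g : Fin n → Fin n → ℕ)) := by
  classical
  have hsupp : ∀ g ∈ Tk n n₁ k, ∀ i t : Fin n, ¬(i.val < n₁ ∧ n₁ ≤ t.val) → g i t = 0 :=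
    fun g hg => ((Finset.mem_filter.mp hg).2).1
  rcases hcase with ⟨hn₁, hn⟩ | ⟨hgt, hn₁⟩
  · -- case n₁ = 2
    subst hn₁
    have hn4 : 4 ≤ n := by omega
    obtain ⟨a, ha⟩ : ∃ a : Fin n, a.val = 0 := ⟨⟨0, by omega⟩, rfl⟩
    obtain ⟨b, hb⟩ : ∃ b : Fin n, b.val = 1 := ⟨⟨1, by omega⟩, rfl⟩
    have hab : a ≠ b := by
      intro h
      rw [h] at ha
      omega
    have hL : Lset n 2 = {a, b} := by
      ext i
      rw [mem_Lset]
      simp only [Finset.mem_insert, Finset.mem_singleton, Fin.ext_iff]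
      omega
    have haR : a ∉ Rset n 2 := by
      rw [mem_Rset]
      omega
    have hbR : b ∉ Rset n 2 := by
      rw [mem_Rset]
      omega
    have heq : (fun g : ↥(Tk n 2 k) => Ff n 2 (g : Fin n → Fin n → ℕ)) =
        (fun g : ↥(Tk n 2 k) => ∏ t ∈ Rset n 2,
          ((X (Sum.inl a) * X (Sum.inl t) - X (Sum.inr a) * X (Sum.inr t)) ^
              (g : Fin n → Fin n → ℕ) a t *
            (X (Sum.inl b) * X (Sum.inl t) - X (Sum.inr b) * X (Sum.inr t)) ^
              (g : Fin n → Fin n → ℕ) b t : MvPolynomial (Fin n ⊕ Fin n) ℝ)) := by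
      funext g
      rw [Ff, hL, Finset.prod_pair hab, ← Finset.prod_mul_distrib]
    rw [heq]
    apply core hab haR hbR
    intro p q hpq
    apply Subtype.ext
    funext i t
    by_cases hc : i.val < 2 ∧ 2 ≤ t.val
    · have htR : t ∈ Rset n 2 := mem_Rset.mpr hc.2
      have : i = a ∨ i = b := by
        simp only [Fin.ext_iff]
        omega
      rcases this with rfl | rfl
      · exact (hpq t htR).1
      · exact (hpq t htR).2
    · rw [hsupp p p.2 i t hc, hsupp q q.2 i t hc]
  · -- case n₁ = n - 2
    have hn4 : 4 ≤ n := by omega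
    have hlt : n₁ + 1 < n := by omega
    obtain ⟨a, ha⟩ : ∃ a : Fin n, a.val = n₁ := ⟨⟨n₁, h2⟩, rfl⟩
    obtain ⟨b, hb⟩ : ∃ b : Fin n, b.val = n₁ + 1 := ⟨⟨n₁ + 1, hlt⟩, rfl⟩
    have hab : a ≠ b := by
      intro h
      rw [h] at ha
      omega
    have hR : Rset n n₁ = {a, b} := by
      ext t
      rw [mem_Rset]
      simp only [Finset.mem_insert, Finset.mem_singleton, Fin.ext_iff]
      have := t.isLt
      omega
    have haL : a ∉ Lset n n₁ := by
      rw [mem_Lset]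
      omega
    have hbL : b ∉ Lset n n₁ := by
      rw [mem_Lset]
      omega
    have heq : (fun g : ↥(Tk n n₁ k) => Ff n n₁ (g : Fin n → Fin n → ℕ)) =
        (fun g : ↥(Tk n n₁ k) => ∏ i ∈ Lset n n₁,
          ((X (Sum.inl a) * X (Sum.inl i) - X (Sum.inr a) * X (Sum.inr i)) ^
              (g : Fin n → Fin n → ℕ) i a *
            (X (Sum.inl b) * X (Sum.inl i) - X (Sum.inr b) * X (Sum.inr i)) ^
              (g : Fin n → Fin n → ℕ) i b : MvPolynomial (Fin n ⊕ Fin n) ℝ)) := by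
      funext g
      rw [Ff]
      refine Finset.prod_congr rfl fun i hi => ?_
      rw [hR, Finset.prod_pair hab]
      ring
    rw [heq]
    apply core hab haL hbL
    intro p q hpq
    apply Subtype.ext
    funext i t
    by_cases hc : i.val < n₁ ∧ n₁ ≤ t.val
    · have hiL : i ∈ Lset n n₁ := by
        simp only [Lset, Finset.mem_filter, Finset.mem_univ, true_and]; exact hc.1
      have : t = a ∨ t = b := by
        have := t.isLt
        rcases Nat.lt_or_ge t.val (n₁ + 1) with h | h
        · exact Or.inl (Fin.ext (by omega))
        · exact Or.inr (Fin.ext (by omega))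
      rcases this with rfl | rfl
      · exact (hpq i hiL).1
      · exact (hpq i hiL).2
    · rw [hsupp p p.2 i t hc, hsupp q q.2 i t hc]

lemma rank_eq (n n₁ k : ℕ) (h1 : 1 ≤ n₁) (h2 : n₁ < n)
    (hcase : (n₁ = 2 ∧ 2 < n - 1) ∨ (1 < n₁ ∧ n₁ = n - 2)) :
    Module.finrank ℝ (Submodule.span ℝ (Nset n n₁ k)) = (Tk n n₁ k).card := by
  classical
  have hset : Nset n n₁ k = ↑((Tk n n₁ k).image (Ff n n₁)) := Nset_eq n n₁ k
  haveI hfd : FiniteDimensional ℝ (Submodule.span ℝ (Nset n n₁ k)) := by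
    rw [hset]
    exact FiniteDimensional.span_of_finite ℝ (Finset.finite_toSet _)
  apply le_antisymm
  · rw [hset]
    exact (finrank_span_finset_le_card _).trans Finset.card_image_le
  · have hind := indep n n₁ k h1 h2 hcase
    have hr := finrank_span_eq_card hind
    rw [Fintype.card_coe] at hr
    have hsub : Set.range (fun g : ↥(Tk n n₁ k) => Ff n n₁ (g : Fin n → Fin n → ℕ)) ⊆
        Nset n n₁ k := by
      rintro _ ⟨g, rfl⟩
      exact ⟨(g : Fin n → Fin n → ℕ), ((Finset.mem_filter.mp g.2).2).2, rfl⟩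
    calc (Tk n n₁ k).card
        = Module.finrank ℝ (Submodule.span ℝ
            (Set.range (fun g : ↥(Tk n n₁ k) => Ff n n₁ (g : Fin n → Fin n → ℕ)))) := hr.symm
      _ ≤ Module.finrank ℝ (Submodule.span ℝ (Nset n n₁ k)) :=
          Submodule.finrank_mono (Submodule.span_mono hsub)

theorem stmt_2 (n n₁ : ℕ) (hn : 2 ≤ n) (h1 : 1 ≤ n₁) (h2 : n₁ < n)
    (hcase : (n₁ = 2 ∧ 2 < n - 1) ∨ (1 < n₁ ∧ n₁ = n - 2)) :
    ∃ c₁ c₂ : ℝ, 0 < c₁ ∧ 0 < c₂ ∧ ∃ K : ℕ, ∀ k ≥ K,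
      c₁ * (k : ℝ) ^ (2 * n - 5) ≤
        (Module.finrank ℝ (Submodule.span ℝ (Nset n n₁ k)) : ℝ) ∧
      (Module.finrank ℝ (Submodule.span ℝ (Nset n n₁ k)) : ℝ) ≤
        c₂ * (k : ℝ) ^ (2 * n - 5) := by
  classical
  have hn4 : 4 ≤ n := by rcases hcase with ⟨hA, hB⟩ | ⟨hA, hB⟩ <;> omega
  have hm : n₁ * (n - n₁) = 2 * n - 4 := by
    rcases hcase with ⟨hA, hB⟩ | ⟨hA, hB⟩
    · subst hA
      omega
    · rw [hB]
      have h2' : n - (n - 2) = 2 := by omega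
      rw [h2']
      omega
  set M := 2 * n - 5 with hM
  have hM1 : 1 ≤ M := by omega
  have hMpos : (0 : ℝ) < (M : ℝ) := by exact_mod_cast (by omega : 0 < M)
  have hmM : n₁ * (n - n₁) - 1 = M := by omega
  refine ⟨(1 / (M : ℝ)) ^ M, 2 ^ M, by positivity, by positivity, 1, ?_⟩
  intro k hk
  have hrank := rank_eq n n₁ k h1 h2 hcase
  rw [hrank]
  set d := (Tk n n₁ k).card with hd
  have hub : d ≤ (k + 1) ^ M := by
    rw [← hmM]
    exact card_Tk_le k h1 h2
  have hlb : (k / M + 1) ^ M ≤ d := by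
    have h2m : 2 ≤ n₁ * (n - n₁) := by omega
    have := card_Tk_ge k h1 h2 h2m
    rw [hmM] at this
    exact this
  constructor
  · have hdiv : k < M * (k / M + 1) := by
      have hdm := Nat.div_add_mod k M
      have hmod : k % M < M := Nat.mod_lt k (by omega)
      have hexp : M * (k / M + 1) = M * (k / M) + M := Nat.mul_succ M (k / M)
      omega
    have hR1 : (k : ℝ) / (M : ℝ) ≤ ((k / M : ℕ) : ℝ) + 1 := by
      rw [div_le_iff₀ hMpos]
      have hcast : (k : ℝ) ≤ (M : ℝ) * (((k / M : ℕ) : ℝ) + 1) := by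
        exact_mod_cast hdiv.le
      linarith
    calc (1 / (M : ℝ)) ^ M * (k : ℝ) ^ M
        = ((k : ℝ) / (M : ℝ)) ^ M := by
          rw [← mul_pow, one_div_mul_eq_div]
      _ ≤ (((k / M : ℕ) : ℝ) + 1) ^ M := pow_le_pow_left₀ (by positivity) hR1 M
      _ = (((k / M + 1 : ℕ)) : ℝ) ^ M := by push_cast; ring
      _ ≤ (d : ℝ) := by exact_mod_cast hlb
  · calc (d : ℝ) ≤ (((k + 1 : ℕ)) : ℝ) ^ M := by exact_mod_cast hub
      _ = ((k : ℝ) + 1) ^ M := by push_cast; ring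
      _ ≤ (2 * (k : ℝ)) ^ M := by
          apply pow_le_pow_left₀ (by positivity)
          have : (1 : ℝ) ≤ (k : ℝ) := by exact_mod_cast hk
          linarith
      _ = 2 ^ M * (k : ℝ) ^ M := mul_pow _ _ _
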